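/- arXiv:1412.1964 — 2 statements merged into one kernel-verified Lean document; each statement's English description precedes it below -/
import Mathlib

section
/- For T ≥ 0, the list-size exponent of the scaled-ML decoder dominates its error exponent plus T: min over (Q̃, Q) with Q_Y = Q̃_Y and f(Q) ≥ f(Q̃) + T of {D(Q̃_{Y|X}||W|P_X) + I(Q) − R} ≥ min over (Q̃, Q) with Q_Y = Q̃_Y of {D(Q̃_{Y|X}||W|P_X) + I(Q) − R + T}. (The proof uses the constraint f(Q) ≥ f(Q̃) + T, the identity D(Q̃_{Y|X}||W|P_X) + I(Q) = D(Q_{Y|X}||W|P_X) + I(Q̃) + f(Q) − f(Q̃), and relabeling Q ↔ Q̃.) -/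
open scoped BigOperators

noncomputable section

variable {X Y : Type*}

/-- A probability distribution on a finite set. -/
def IsDist {Z : Type*} [Fintype Z] (q : Z → ℝ) : Prop :=
  (∀ z, 0 ≤ q z) ∧ ∑ z, q z = 1

/-- X-marginal of a joint distribution. -/
def margX [Fintype Y] (q : X × Y → ℝ) (x : X) : ℝ := ∑ y, q (x, y)

/-- Y-marginal of a joint distribution. -/
def margY [Fintype X] (q : X × Y → ℝ) (y : Y) : ℝ := ∑ x, q (x, y)

/-- f(Q) = Σ Q(x,y) log W(y|x). -/
def flik [Fintype X] [Fintype Y] (W : X → Y → ℝ) (q : X × Y → ℝ) : ℝ :=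
  ∑ z : X × Y, q z * Real.log (W z.1 z.2)

/-- Conditional divergence D(Q_{Y|X} ‖ W | P_X) = Σ Q(x,y) log(Q(x,y)/(P(x)W(y|x))). -/
def condDiv [Fintype X] [Fintype Y] (W : X → Y → ℝ) (P : X → ℝ) (q : X × Y → ℝ) : ℝ :=
  ∑ z : X × Y, q z * Real.log (q z / (P z.1 * W z.1 z.2))

/-- Mutual information I(Q) = Σ Q(x,y) log(Q(x,y)/(Q_X(x)Q_Y(y))). -/
def mutInf [Fintype X] [Fintype Y] (q : X × Y → ℝ) : ℝ :=
  ∑ z : X × Y, q z * Real.log (q z / (margX q z.1 * margY q z.2))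

/-- Optimal output-threshold function g*(Q_Y, E), as an extended real
(`⊤` when the constraint set is empty). -/
def gstar [Fintype X] [Fintype Y] (W : X → Y → ℝ) (P : X → ℝ) (qY : Y → ℝ) (E : ℝ) : EReal :=
  sInf {v : EReal | ∃ q : X × Y → ℝ, IsDist q ∧ margX q = P ∧ margY q = qY ∧
    condDiv W P q ≤ E ∧ v = (flik W q : EReal)}

lemma term_decomp (a b c : ℝ) (ha : 0 ≤ a) (hb : a ≠ 0 → 0 < b) (hc : a ≠ 0 → 0 < c) :
    a * Real.log (a / (b * c)) = a * Real.log a - a * Real.log b - a * Real.log c := by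
  rcases eq_or_ne a 0 with h | h
  · simp [h]
  · have hb := hb h; have hc := hc h
    rw [Real.log_div h (by positivity), Real.log_mul hb.ne' hc.ne']
    ring

lemma sum_fst [Fintype X] [Fintype Y] (q : X × Y → ℝ) (g : X → ℝ) :
    ∑ z : X × Y, q z * g z.1 = ∑ x, margX q x * g x := by
  rw [Fintype.sum_prod_type]
  simp [margX, Finset.sum_mul]

lemma sum_snd [Fintype X] [Fintype Y] (q : X × Y → ℝ) (g : Y → ℝ) :
    ∑ z : X × Y, q z * g z.2 = ∑ y, margY q y * g y := by
  rw [Fintype.sum_prod_type_right]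
  simp [margY, Finset.sum_mul]

lemma margX_pos [Fintype X] [Fintype Y] (q : X × Y → ℝ) (hq : ∀ z, 0 ≤ q z)
    (z : X × Y) (hz : q z ≠ 0) : 0 < margX q z.1 := by
  have h1 : 0 < q z := (hq z).lt_of_ne' hz
  have : q (z.1, z.2) ≤ margX q z.1 :=
    Finset.single_le_sum (fun y _ => hq (z.1, y)) (Finset.mem_univ z.2)
  simpa using lt_of_lt_of_le h1 (by simpa using this)

lemma margY_pos [Fintype X] [Fintype Y] (q : X × Y → ℝ) (hq : ∀ z, 0 ≤ q z)
    (z : X × Y) (hz : q z ≠ 0) : 0 < margY q z.2 := by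
  have h1 : 0 < q z := (hq z).lt_of_ne' hz
  have : q (z.1, z.2) ≤ margY q z.2 :=
    Finset.single_le_sum (fun x _ => hq (x, z.2)) (Finset.mem_univ z.1)
  simpa using lt_of_lt_of_le h1 (by simpa using this)

lemma condDiv_decomp [Fintype X] [Fintype Y] (W : X → Y → ℝ) (P : X → ℝ)
    (hW : ∀ x y, 0 < W x y) (q : X × Y → ℝ) (hq : ∀ z, 0 ≤ q z) (hXP : margX q = P) :
    condDiv W P q =
      (∑ z : X × Y, q z * Real.log (q z)) - (∑ z : X × Y, q z * Real.log (P z.1))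
        - flik W q := by
  unfold condDiv flik
  rw [← Finset.sum_sub_distrib, ← Finset.sum_sub_distrib]
  refine Finset.sum_congr rfl fun z _ => ?_
  exact term_decomp _ _ _ (hq z)
    (fun hz => hXP ▸ margX_pos q hq z hz) (fun _ => hW z.1 z.2)

lemma mutInf_decomp [Fintype X] [Fintype Y] (q : X × Y → ℝ) (hq : ∀ z, 0 ≤ q z) :
    mutInf q =
      (∑ z : X × Y, q z * Real.log (q z)) - (∑ z : X × Y, q z * Real.log (margX q z.1))
        - (∑ z : X × Y, q z * Real.log (margY q z.2)) := by
  unfold mutInf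
  rw [← Finset.sum_sub_distrib, ← Finset.sum_sub_distrib]
  refine Finset.sum_congr rfl fun z _ => ?_
  exact term_decomp _ _ _ (hq z) (margX_pos q hq z) (margY_pos q hq z)

lemma key_identity [Fintype X] [Fintype Y] (W : X → Y → ℝ) (P : X → ℝ)
    (hW : ∀ x y, 0 < W x y) (qt q : X × Y → ℝ)
    (hqt : ∀ z, 0 ≤ qt z) (hq : ∀ z, 0 ≤ q z)
    (h1 : margX qt = P) (h2 : margX q = P) (h3 : margY q = margY qt) :
    condDiv W P qt + mutInf q = condDiv W P q + mutInf qt + flik W q - flik W qt := by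
  have e1 := condDiv_decomp W P hW qt hqt h1
  have e2 := condDiv_decomp W P hW q hq h2
  have e3 := mutInf_decomp qt hqt
  have e4 := mutInf_decomp q hq
  have b1 : (∑ z : X × Y, qt z * Real.log (P z.1))
      = ∑ z : X × Y, q z * Real.log (P z.1) := by
    rw [sum_fst qt (fun x => Real.log (P x)), sum_fst q (fun x => Real.log (P x)), h1, h2]
  have b2 : (∑ z : X × Y, q z * Real.log (margX q z.1))
      = ∑ z : X × Y, qt z * Real.log (margX qt z.1) := by
    rw [sum_fst q (fun x => Real.log (margX q x)),
      sum_fst qt (fun x => Real.log (margX qt x)), h1, h2]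
  have b3 : (∑ z : X × Y, q z * Real.log (margY q z.2))
      = ∑ z : X × Y, qt z * Real.log (margY qt z.2) := by
    rw [sum_snd q (fun y => Real.log (margY q y)),
      sum_snd qt (fun y => Real.log (margY qt y)), h3]
  rw [e1, e2, e3, e4, b1, b2, b3]
  have b4 : (∑ z : X × Y, qt z * Real.log (margX qt z.1))
      = ∑ z : X × Y, qt z * Real.log (P z.1) := by
    rw [sum_fst qt (fun x => Real.log (margX qt x)), sum_fst qt (fun x => Real.log (P x)), h1]
  rw [b4]; ring

theorem list_exponent_dominates_error_plus_T
    [Fintype X] [Fintype Y] (W : X → Y → ℝ) (P : X → ℝ)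
    (hW : ∀ x y, 0 < W x y) (hP : IsDist P) (R T : ℝ) (hR : 0 ≤ R) (hT : 0 ≤ T) :
    sInf {v : EReal | ∃ qt q : X × Y → ℝ, IsDist qt ∧ IsDist q ∧
        margX qt = P ∧ margX q = P ∧ margY q = margY qt ∧
        flik W qt + T ≤ flik W q ∧
        v = ((condDiv W P qt + mutInf q - R : ℝ) : EReal)}
      ≥ sInf {v : EReal | ∃ qt q : X × Y → ℝ, IsDist qt ∧ IsDist q ∧
        margX qt = P ∧ margX q = P ∧ margY q = margY qt ∧
        v = ((condDiv W P qt + mutInf q - R + T : ℝ) : EReal)} := by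
  refine le_sInf fun v hv => ?_
  obtain ⟨qt, q, hqt, hq, hXqt, hXq, hYeq, hflik, rfl⟩ := hv
  refine sInf_le_of_le (b := ((condDiv W P q + mutInf qt - R + T : ℝ) : EReal)) ?_ ?_
  · exact ⟨q, qt, hq, hqt, hXq, hXqt, hYeq.symm, rfl⟩
  · have hkey := key_identity W P hW qt q hqt.1 hq.1 hXqt hXq hYeq
    have : condDiv W P q + mutInf qt - R + T ≤ condDiv W P qt + mutInf q - R := by
      linarith
    exact_mod_cast EReal.coe_le_coe_iff.mpr this
end
end

section
/- For a sequence of events A₁, …, A_M that are pairwise independent and identically distributed with common probability p, the probability of their union satisfies min(Mp, 1)/4 ≤ P(∪ₘ Aₘ) ≤ min(Mp, 1). In particular, if M = e^{nR} and p ≐ e^{-nI} exponentially, then P(∪ₘ Aₘ) ≐ e^{-n[I−R]₊}. -/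
open MeasureTheory

lemma two_mul_sum_le_key {Ω : Type*} [MeasurableSpace Ω] (μ : Measure Ω) {ι : Type*}
    [DecidableEq ι] (A : ι → Set Ω) (hA : ∀ i, MeasurableSet (A i)) (s : Finset ι) :
    2 * ∑ i ∈ s, μ (A i) ≤ 2 * μ (⋃ i ∈ s, A i) + ∑ q ∈ s.offDiag, μ (A q.1 ∩ A q.2) := by
  induction s using Finset.induction_on with
  | empty => simp
  | @insert a s ha ih =>
    have hmeas : MeasurableSet (⋃ i ∈ s, A i) := s.measurableSet_biUnion (fun i _ => hA i)
    have hU : (⋃ i ∈ insert a s, A i) = A a ∪ ⋃ i ∈ s, A i := by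
      simp [Finset.set_biUnion_insert]
    have h1 : μ (A a ∪ ⋃ i ∈ s, A i) + μ (A a ∩ ⋃ i ∈ s, A i) = μ (A a) + μ (⋃ i ∈ s, A i) :=
      measure_union_add_inter _ hmeas
    have h2 : μ (A a ∩ ⋃ i ∈ s, A i) ≤ ∑ i ∈ s, μ (A a ∩ A i) := by
      rw [Set.inter_iUnion₂]
      exact measure_biUnion_finset_le s _
    have hod : ∑ q ∈ (insert a s).offDiag, μ (A q.1 ∩ A q.2)
        = ∑ q ∈ s.offDiag, μ (A q.1 ∩ A q.2) + 2 * ∑ i ∈ s, μ (A a ∩ A i) := by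
      rw [Finset.offDiag_insert (a := a) ha]
      rw [Finset.sum_union, Finset.sum_union]
      · have e1 : ∑ q ∈ {a} ×ˢ s, μ (A q.1 ∩ A q.2) = ∑ i ∈ s, μ (A a ∩ A i) := by
          rw [Finset.sum_product]; simp
        have e2 : ∑ q ∈ s ×ˢ {a}, μ (A q.1 ∩ A q.2) = ∑ i ∈ s, μ (A a ∩ A i) := by
          rw [Finset.sum_product]
          simp [Set.inter_comm]
        rw [e1, e2]; ring
      · -- Disjoint offDiag ({a} ×ˢ s)
        simp only [Finset.disjoint_left]
        rintro ⟨x, y⟩ hx hy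
        rw [Finset.mem_offDiag] at hx
        simp only [Finset.mem_product, Finset.mem_singleton] at hy
        exact ha (hy.1 ▸ hx.1)
      · -- Disjoint (offDiag ∪ {a} ×ˢ s) (s ×ˢ {a})
        simp only [Finset.disjoint_left]
        rintro ⟨x, y⟩ hx hy
        simp only [Finset.mem_product, Finset.mem_singleton] at hy
        rcases Finset.mem_union.1 hx with hx | hx
        · rw [Finset.mem_offDiag] at hx
          exact ha (hy.2 ▸ hx.2.1)
        · simp only [Finset.mem_product, Finset.mem_singleton] at hx
          exact ha (hy.2 ▸ hx.2)
    rw [Finset.sum_insert ha, hU, hod]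
    calc 2 * (μ (A a) + ∑ i ∈ s, μ (A i))
        = 2 * μ (A a) + 2 * ∑ i ∈ s, μ (A i) := by ring
      _ ≤ 2 * μ (A a) + (2 * μ (⋃ i ∈ s, A i) + ∑ q ∈ s.offDiag, μ (A q.1 ∩ A q.2)) := by
          gcongr
      _ = 2 * (μ (A a) + μ (⋃ i ∈ s, A i)) + ∑ q ∈ s.offDiag, μ (A q.1 ∩ A q.2) := by ring
      _ = 2 * (μ (A a ∪ ⋃ i ∈ s, A i) + μ (A a ∩ ⋃ i ∈ s, A i))
            + ∑ q ∈ s.offDiag, μ (A q.1 ∩ A q.2) := by rw [h1]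
      _ = 2 * μ (A a ∪ ⋃ i ∈ s, A i) + ∑ q ∈ s.offDiag, μ (A q.1 ∩ A q.2)
            + 2 * μ (A a ∩ ⋃ i ∈ s, A i) := by ring
      _ ≤ 2 * μ (A a ∪ ⋃ i ∈ s, A i) + ∑ q ∈ s.offDiag, μ (A q.1 ∩ A q.2)
            + 2 * ∑ i ∈ s, μ (A a ∩ A i) := by gcongr
      _ = 2 * μ (A a ∪ ⋃ i ∈ s, A i)
            + (∑ q ∈ s.offDiag, μ (A q.1 ∩ A q.2) + 2 * ∑ i ∈ s, μ (A a ∩ A i)) := by ring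

theorem union_bound_pairwise_independent
    {Ω : Type*} [MeasurableSpace Ω] (μ : Measure Ω) [IsProbabilityMeasure μ]
    (M : ℕ) (hM : 0 < M) (A : Fin M → Set Ω) (hA : ∀ i, MeasurableSet (A i))
    (p : ℝ) (hp0 : 0 ≤ p) (hp1 : p ≤ 1)
    (hprob : ∀ i, μ (A i) = ENNReal.ofReal p)
    (hpair : ∀ i j, i ≠ j → μ (A i ∩ A j) = ENNReal.ofReal (p ^ 2)) :
    ENNReal.ofReal (min ((M : ℝ) * p) 1 / 4) ≤ μ (⋃ i, A i) ∧
    μ (⋃ i, A i) ≤ ENNReal.ofReal (min ((M : ℝ) * p) 1) := by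
  classical
  -- upper bound
  have hupper : μ (⋃ i, A i) ≤ ENNReal.ofReal (min ((M : ℝ) * p) 1) := by
    rcases le_total ((M : ℝ) * p) 1 with h | h
    · rw [min_eq_left h]
      calc μ (⋃ i, A i) ≤ ∑' i, μ (A i) := measure_iUnion_le A
        _ = ∑ i : Fin M, μ (A i) := tsum_fintype _
        _ = ENNReal.ofReal ((M : ℝ) * p) := by
            simp only [hprob, Finset.sum_const, Finset.card_univ, Fintype.card_fin,
              nsmul_eq_mul]
            rw [← ENNReal.ofReal_natCast M, ← ENNReal.ofReal_mul (by positivity)]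
    · rw [min_eq_right h, ENNReal.ofReal_one]
      exact prob_le_one
  refine ⟨?_, hupper⟩
  -- main helper: for any K ≤ M
  have main : ∀ K : ℕ, K ≤ M →
      ENNReal.ofReal ((K : ℝ) * p - ((K : ℝ) * K - K) * p ^ 2 / 2) ≤ μ (⋃ i, A i) := by
    intro K hK
    obtain ⟨s, -, hcard⟩ := Finset.exists_subset_card_eq
      (show K ≤ (Finset.univ : Finset (Fin M)).card by simpa using hK)
    have key := two_mul_sum_le_key μ A hA s
    have hs1 : ∑ i ∈ s, μ (A i) = ENNReal.ofReal ((K : ℝ) * p) := by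
      simp only [hprob, Finset.sum_const, hcard, nsmul_eq_mul]
      rw [← ENNReal.ofReal_natCast K, ← ENNReal.ofReal_mul (by positivity)]
    have hKK : K ≤ K * K := by
      cases K with
      | zero => simp
      | succ n => exact Nat.le_mul_of_pos_left _ (Nat.succ_pos n)
    have hKKr : (0:ℝ) ≤ (K : ℝ) * K - K := by
      have : (K:ℝ) ≤ (K:ℝ) * K := by exact_mod_cast hKK
      linarith
    have hq2 : (0:ℝ) ≤ ((K : ℝ) * K - K) * p ^ 2 := mul_nonneg hKKr (sq_nonneg p)
    have hs2 : ∑ q ∈ s.offDiag, μ (A q.1 ∩ A q.2)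
        = ENNReal.ofReal (((K : ℝ) * K - K) * p ^ 2) := by
      have hterm : ∀ q ∈ s.offDiag, μ (A q.1 ∩ A q.2) = ENNReal.ofReal (p ^ 2) := by
        intro q hq
        exact hpair _ _ (Finset.mem_offDiag.1 hq).2.2
      rw [Finset.sum_congr rfl hterm, Finset.sum_const, Finset.offDiag_card, hcard,
        nsmul_eq_mul]
      rw [← ENNReal.ofReal_natCast, ← ENNReal.ofReal_mul (by positivity)]
      congr 1
      push_cast [Nat.cast_sub hKK]
      ring
    set u : ℝ := (μ (⋃ i ∈ s, A i)).toReal with hu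
    have hfin : μ (⋃ i ∈ s, A i) ≠ ⊤ := measure_ne_top μ _
    have hmu : μ (⋃ i ∈ s, A i) = ENNReal.ofReal u := (ENNReal.ofReal_toReal hfin).symm
    have hu0 : 0 ≤ u := ENNReal.toReal_nonneg
    rw [hs1, hs2, hmu] at key
    have key2 : ENNReal.ofReal (2 * ((K : ℝ) * p))
        ≤ ENNReal.ofReal (2 * u + ((K : ℝ) * K - K) * p ^ 2) := by
      calc ENNReal.ofReal (2 * ((K : ℝ) * p))
          = 2 * ENNReal.ofReal ((K : ℝ) * p) := by
            rw [ENNReal.ofReal_mul (by norm_num), ENNReal.ofReal_ofNat]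
        _ ≤ 2 * ENNReal.ofReal u + ENNReal.ofReal (((K : ℝ) * K - K) * p ^ 2) := key
        _ = ENNReal.ofReal (2 * u) + ENNReal.ofReal (((K : ℝ) * K - K) * p ^ 2) := by
            rw [ENNReal.ofReal_mul (by norm_num : (0:ℝ) ≤ 2), ENNReal.ofReal_ofNat]
        _ = ENNReal.ofReal (2 * u + ((K : ℝ) * K - K) * p ^ 2) :=
            (ENNReal.ofReal_add (by positivity) hq2).symm

    have hreal : 2 * ((K : ℝ) * p) ≤ 2 * u + ((K : ℝ) * K - K) * p ^ 2 := by
      have hrhs : 0 ≤ 2 * u + ((K : ℝ) * K - K) * p ^ 2 := by linarith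
      exact (ENNReal.ofReal_le_ofReal_iff hrhs).1 key2
    calc ENNReal.ofReal ((K : ℝ) * p - ((K : ℝ) * K - K) * p ^ 2 / 2)
        ≤ ENNReal.ofReal u := ENNReal.ofReal_le_ofReal (by linarith)
      _ = μ (⋃ i ∈ s, A i) := hmu.symm
      _ ≤ μ (⋃ i, A i) := measure_mono (Set.iUnion₂_subset fun i _ => Set.subset_iUnion A i)
  -- now case analysis
  rcases le_total ((M : ℝ) * p) 1 with h | h
  · rw [min_eq_left h]
    refine le_trans (ENNReal.ofReal_le_ofReal ?_) (main M le_rfl)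
    nlinarith [mul_nonneg (Nat.cast_nonneg (α := ℝ) M) hp0, sq_nonneg ((M:ℝ)*p)]
  · rw [min_eq_right h]
    rcases le_total (1/2 : ℝ) p with hp | hp
    · -- p ≥ 1/2 : single event suffices
      calc ENNReal.ofReal (1 / 4) ≤ ENNReal.ofReal p :=
            ENNReal.ofReal_le_ofReal (by linarith)
        _ = μ (A ⟨0, hM⟩) := (hprob _).symm
        _ ≤ μ (⋃ i, A i) := measure_mono (Set.subset_iUnion A _)
    · -- p < 1/2 : use K = ⌊1/p⌋ events
      have hppos : 0 < p := by
        by_contra hc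
        push_neg at hc
        nlinarith [Nat.cast_nonneg (α := ℝ) M]
      set K : ℕ := ⌊1 / p⌋₊ with hKdef
      have hKle : (K : ℝ) ≤ 1 / p := Nat.floor_le (by positivity)
      have hKgt : 1 / p < (K : ℝ) + 1 := Nat.lt_floor_add_one _
      have hKp1 : (K : ℝ) * p ≤ 1 := by
        have := (le_div_iff₀ hppos).1 hKle
        linarith
      have hKp2 : 1 < ((K : ℝ) + 1) * p := (div_lt_iff₀ hppos).1 hKgt
      have hKM : K ≤ M := by
        have hMr : 1 / p ≤ (M : ℝ) := by
          rw [div_le_iff₀ hppos]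
          linarith
        have : (K : ℝ) ≤ M := hKle.trans hMr
        exact_mod_cast this
      refine le_trans (ENNReal.ofReal_le_ofReal ?_) (main K hKM)
      have ht2 : 1 - p ≤ (K : ℝ) * p := by linarith
      nlinarith [mul_nonneg (sub_nonneg.2 hKp1) (sub_nonneg.2 ht2),
        mul_nonneg hp0 (sub_nonneg.2 hp), sq_nonneg p,
        mul_nonneg (mul_nonneg (Nat.cast_nonneg (α := ℝ) K) hp0) hp0]
end
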